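/- Let A and D be SPD with eigenvalues of D⁻¹A contained in [α, β] ⊂ (0, 2), and let M_k⁻¹ = p_k(D⁻¹A)D⁻¹ with p_k(x) = ∑_{j=0}^{k-1}(1-x)^j, k odd. Then the eigenvalues of M_k⁻¹A lie in [1 - γ^k, 1 + γ^k] where γ = max(|1-α|, |1-β|) < 1; consequently the spectral condition number of M_k⁻¹A is at most (1+γ^k)/(1-γ^k), which tends to 1 as k → ∞. -/

import Mathlib

open Filter Topology

lemma mem_spectrum_map_ofReal {n : ℕ} (M : Matrix (Fin n) (Fin n) ℝ) (μ : ℝ) :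
    μ ∈ spectrum ℝ M ↔ (μ : ℂ) ∈ spectrum ℂ (M.map Complex.ofReal) := by
  rw [spectrum.mem_iff, spectrum.mem_iff, not_iff_not,
    Matrix.isUnit_iff_isUnit_det, Matrix.isUnit_iff_isUnit_det,
    isUnit_iff_ne_zero, isUnit_iff_ne_zero]
  have h : (algebraMap ℂ (Matrix (Fin n) (Fin n) ℂ) (μ : ℂ) - M.map Complex.ofReal)
      = (algebraMap ℝ (Matrix (Fin n) (Fin n) ℝ) μ - M).map Complex.ofReal := by
    ext i j
    simp [Matrix.algebraMap_matrix_apply, apply_ite]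
  rw [h]
  rw [show (algebraMap ℝ (Matrix (Fin n) (Fin n) ℝ) μ - M).map Complex.ofReal
      = Complex.ofRealHom.mapMatrix (algebraMap ℝ (Matrix (Fin n) (Fin n) ℝ) μ - M) from rfl,
    ← RingHom.map_det]
  simp

lemma spectrum_map_ofReal_eq {n : ℕ} (A D : Matrix (Fin n) (Fin n) ℝ)
    (hA : A.PosDef) (hD : D.PosDef) :
    spectrum ℂ ((D⁻¹ * A).map Complex.ofReal) = Complex.ofReal '' spectrum ℝ (D⁻¹ * A) ∧
      (0 < n → (spectrum ℝ (D⁻¹ * A)).Nonempty) := by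
  open scoped MatrixOrder in
  set T : Matrix (Fin n) (Fin n) ℝ := CFC.sqrt D with hTdef
  open scoped MatrixOrder in
  have hTT : T * T = D := CFC.sqrt_mul_sqrt_self D hD.posSemidef.nonneg
  open scoped MatrixOrder in
  have hTsym : T.IsHermitian := (Matrix.nonneg_iff_posSemidef.mp (CFC.sqrt_nonneg D)).1
  have hdetT : IsUnit T.det := by
    have : T.det * T.det = D.det := by rw [← Matrix.det_mul, hTT]
    have hpos : 0 < D.det := hD.det_pos
    refine isUnit_iff_ne_zero.2 fun h => ?_
    rw [h, mul_zero] at this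
    exact hpos.ne' this.symm
  have hTiT : T⁻¹ * T = 1 := Matrix.nonsing_inv_mul T hdetT
  have hTTi : T * T⁻¹ = 1 := Matrix.mul_nonsing_inv T hdetT
  set S : Matrix (Fin n) (Fin n) ℝ := T⁻¹ * A * T⁻¹ with hSdef
  have hDinv : D⁻¹ = T⁻¹ * T⁻¹ := by rw [← hTT, Matrix.mul_inv_rev]
  have hXS : D⁻¹ * A = T⁻¹ * S * T := by
    rw [hSdef, hDinv]
    simp only [mul_assoc]
    rw [hTiT, mul_one]
  have hSsym : S.IsHermitian := by
    have hAsym : A.IsHermitian := hA.1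
    have hTinvSym : (T⁻¹).IsHermitian := hTsym.inv
    rw [Matrix.IsHermitian] at hAsym hTinvSym ⊢
    rw [hSdef, Matrix.conjTranspose_mul, Matrix.conjTranspose_mul, hAsym, hTinvSym, mul_assoc]
  -- complexify
  set φ : Matrix (Fin n) (Fin n) ℝ →+* Matrix (Fin n) (Fin n) ℂ :=
    (Complex.ofRealHom.mapMatrix) with hφ
  have hφ_apply : ∀ M : Matrix (Fin n) (Fin n) ℝ, φ M = M.map Complex.ofReal := fun _ => rfl
  set Sc := S.map Complex.ofReal with hScdef
  set Tc := T.map Complex.ofReal with hTcdef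
  have hTc_unit : IsUnit Tc := by
    rw [Matrix.isUnit_iff_isUnit_det, hTcdef,
      show T.map Complex.ofReal = φ T from rfl, ← RingHom.map_det]
    exact hdetT.map _
  have hTc_inv : (T⁻¹).map Complex.ofReal = Tc⁻¹ := by
    refine (Matrix.inv_eq_left_inv ?_).symm
    show φ T⁻¹ * φ T = 1
    rw [← map_mul, hTiT, map_one]
  have hXc : (D⁻¹ * A).map Complex.ofReal = Tc⁻¹ * Sc * Tc := by
    rw [hXS, ← hφ_apply, map_mul, map_mul, hφ_apply, hφ_apply, hφ_apply, hTc_inv]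
  have hconj : spectrum ℂ ((D⁻¹ * A).map Complex.ofReal) = spectrum ℂ Sc := by
    rw [hXc, ← hTc_unit.unit_spec, ← Matrix.coe_units_inv, spectrum.units_conjugate']
  have hScherm : Sc.IsHermitian :=
    hSsym.map Complex.ofReal fun x => (Complex.conj_ofReal x).symm
  have hspecC : spectrum ℂ Sc = Set.range (fun i => (hScherm.eigenvalues i : ℂ)) := by
    conv_lhs => rw [hScherm.spectral_theorem, Unitary.conjStarAlgAut_apply, Unitary.spectrum_star_right_conjugate]
    rw [spectrum_diagonal]
    rfl
  have hspecR : spectrum ℝ Sc = Set.range hScherm.eigenvalues :=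
    hScherm.spectrum_real_eq_range_eigenvalues
  have hSX : spectrum ℝ Sc = spectrum ℝ (D⁻¹ * A) := by
    ext r
    rw [← spectrum.algebraMap_mem_iff ℂ, mem_spectrum_map_ofReal, ← hconj]
    rfl
  constructor
  · rw [hconj, hspecC, ← hSX, hspecR]
    ext z
    simp [Set.range_comp]
  · intro hn
    rw [← hSX, hspecR]
    exact Set.range_nonempty _ (h := ⟨⟨0, hn⟩⟩)

/-- If `A`, `D` are SPD with the spectrum of `D⁻¹A` contained in `[α,β] ⊂ (0,2)` and `k` odd,
then the eigenvalues of `M_k⁻¹A` lie in `[1-γ^k, 1+γ^k]` with `γ = max(|1-α|,|1-β|) < 1`;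
consequently the spectral condition number of `M_k⁻¹A` is at most `(1+γ^k)/(1-γ^k)`,
which tends to `1` as `k → ∞`. -/
theorem neumann_preconditioned_spectrum_bound {n : ℕ} (A D : Matrix (Fin n) (Fin n) ℝ)
    (hA : A.PosDef) (hD : D.PosDef) (α β : ℝ)
    (hα : 0 < α) (hβ : β < 2) (hαβ : α ≤ β)
    (hspec : spectrum ℝ (D⁻¹ * A) ⊆ Set.Icc α β)
    (k : ℕ) (hk1 : 1 ≤ k) (hk : Odd k) :
    let γ := max |1 - α| |1 - β|
    let Mk := (∑ j ∈ Finset.range k, (1 - D⁻¹ * A) ^ j * D⁻¹) * A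
    γ < 1 ∧
      spectrum ℝ Mk ⊆ Set.Icc (1 - γ ^ k) (1 + γ ^ k) ∧
      (∀ μ ∈ spectrum ℝ Mk, ∀ ν ∈ spectrum ℝ Mk,
        μ ≤ ((1 + γ ^ k) / (1 - γ ^ k)) * ν) ∧
      Tendsto (fun m : ℕ => (1 + γ ^ m) / (1 - γ ^ m)) atTop (𝓝 1) := by
  intro γ Mk
  have hγ1 : γ < 1 := by
    rw [max_lt_iff, abs_lt, abs_lt]
    constructor <;> constructor <;> linarith
  have hγ0 : 0 ≤ γ := (abs_nonneg _).trans (le_max_left _ _)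
  have hγk1 : γ ^ k < 1 := pow_lt_one₀ hγ0 hγ1 (by omega)
  have hγk0 : 0 ≤ γ ^ k := pow_nonneg hγ0 k
  -- `Mk = 1 - (1 - D⁻¹A)^k`
  set X := D⁻¹ * A with hXdef
  have hMk : Mk = 1 - (1 - X) ^ k := by
    show (∑ j ∈ Finset.range k, (1 - X) ^ j * D⁻¹) * A = _
    rw [Finset.sum_mul]
    have h1 : ∀ j, (1 - X) ^ j * D⁻¹ * A = (1 - X) ^ j * X := fun j => by
      rw [mul_assoc]
    rw [Finset.sum_congr rfl fun j _ => h1 j, ← Finset.sum_mul]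
    have hgeo := geom_sum_mul (1 - X) k
    rw [show (1 : Matrix (Fin n) (Fin n) ℝ) - X - 1 = -X by abel, mul_neg] at hgeo
    calc (∑ j ∈ Finset.range k, (1 - X) ^ j) * X
        = -(-((∑ j ∈ Finset.range k, (1 - X) ^ j) * X)) := (neg_neg _).symm
    _ = -((1 - X) ^ k - 1) := by rw [hgeo]
    _ = 1 - (1 - X) ^ k := neg_sub _ _
  have hsub : spectrum ℝ Mk ⊆ Set.Icc (1 - γ ^ k) (1 + γ ^ k) := by
    intro μ hμ
    rcases Nat.eq_zero_or_pos n with hn | hn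
    · exfalso
      subst hn
      exact (spectrum.mem_iff.1 hμ) (isUnit_of_subsingleton _)
    obtain ⟨hCeq, hne⟩ := spectrum_map_ofReal_eq A D hA hD
    rw [mem_spectrum_map_ofReal] at hμ
    -- express the complexified Mk as a polynomial in Xc
    set Xc := X.map Complex.ofReal with hXcdef
    set q : Polynomial ℂ := 1 - (1 - Polynomial.X) ^ k with hqdef
    have hmap : Mk.map Complex.ofReal = Polynomial.aeval Xc q := by
      have h2 : (Polynomial.aeval Xc) q = 1 - (1 - Xc) ^ k := by
        simp [hqdef, map_pow]
      rw [h2, hMk]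
      show Complex.ofRealHom.mapMatrix (1 - (1 - X) ^ k) = _
      rw [map_sub, map_one, map_pow, map_sub, map_one]
      rfl
    have hXcne : (spectrum ℂ Xc).Nonempty := by
      rw [hXcdef, hCeq]
      exact ((hne hn).image _)
    rw [hmap, spectrum.map_polynomial_aeval_of_nonempty Xc q hXcne] at hμ
    obtain ⟨z, hz, hev⟩ := hμ
    rw [hXcdef, hCeq] at hz
    obtain ⟨r, hr, rfl⟩ := hz
    have hrIcc := hspec hr
    have heval : Polynomial.eval (r : ℂ) q = ((1 - (1 - r) ^ k : ℝ) : ℂ) := by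
      rw [hqdef]
      push_cast
      simp
    change Polynomial.eval (↑r) q = ↑μ at hev
    rw [heval] at hev
    have hμr : μ = 1 - (1 - r) ^ k := (Complex.ofReal_inj.1 hev).symm
    have habs : |1 - r| ≤ γ := by
      rw [abs_le]
      have h1 := le_abs_self (1 - α)
      have h2 := neg_abs_le (1 - β)
      have h3 := le_max_left |1 - α| |1 - β|
      have h4 := le_max_right |1 - α| |1 - β|
      obtain ⟨hr1, hr2⟩ := hrIcc
      constructor <;> simp only [γ] at * <;> linarith
    have hpow : |(1 - r) ^ k| ≤ γ ^ k := by
      rw [abs_pow]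
      exact pow_le_pow_left₀ (abs_nonneg _) habs k
    rw [abs_le] at hpow
    constructor <;> rw [hμr] <;> linarith [hpow.1, hpow.2]
  refine ⟨hγ1, hsub, ?_, ?_⟩
  · intro μ hμ ν hν
    obtain ⟨hμ1, hμ2⟩ := hsub hμ
    obtain ⟨hν1, hν2⟩ := hsub hν
    have h1 : 0 < 1 - γ ^ k := by linarith
    have hratio : ((1 + γ ^ k) / (1 - γ ^ k)) * (1 - γ ^ k) = 1 + γ ^ k :=
      div_mul_cancel₀ _ h1.ne'
    calc μ ≤ 1 + γ ^ k := hμ2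
    _ = ((1 + γ ^ k) / (1 - γ ^ k)) * (1 - γ ^ k) := hratio.symm
    _ ≤ ((1 + γ ^ k) / (1 - γ ^ k)) * ν :=
        mul_le_mul_of_nonneg_left hν1 (div_nonneg (by linarith) h1.le)
  · have h0 : Tendsto (fun m : ℕ => γ ^ m) atTop (𝓝 0) :=
      tendsto_pow_atTop_nhds_zero_of_lt_one hγ0 hγ1
    have := ((tendsto_const_nhds (x := (1:ℝ))).add h0).div
      ((tendsto_const_nhds (x := (1:ℝ))).sub h0) (by norm_num)
    norm_num at this; exact this
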